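/- Let P be a monoid with left cancellation and let {X_p}_{p ∈ P} be a family of closed subspaces of a C*-algebra B such that A := X_e is a C*-subalgebra of B, X_p · X_q ⊆ X_{pq} for all p, q ∈ P, and X_p* · X_{pq} ⊆ X_q for all p, q ∈ P. If r ∈ P has a (two-sided) inverse r⁻¹ ∈ P, then the adjoint of the closed linear span of A·X_r equals the closed linear span of A·X_{r⁻¹}, i.e. [A·X_r]* = [A·X_{r⁻¹}]. -/

import Mathlib

open scoped ComplexOrder in
lemma aux_mem_closure {B : Type*} [NormedRing B] [StarRing B] [CStarRing B]
    [NormedAlgebra ℂ B] [StarModule ℂ B] [CompleteSpace B]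
    (A : Submodule ℂ B) (hAclosed : IsClosed (A : Set B))
    (hAmul : ∀ a ∈ A, ∀ b ∈ A, a * b ∈ A)
    (S : Set B) (z : B) (hzz : z * star z ∈ A)
    (hgen : ∀ a ∈ A, a * z ∈ S) :
    z ∈ ((Submodule.span ℂ S).topologicalClosure : Set B) := by
  letI : CStarAlgebra B :=
    { ‹NormedRing B›, ‹StarRing B›, ‹CompleteSpace B›, ‹CStarRing B›,
      ‹NormedAlgebra ℂ B›, ‹StarModule ℂ B› with }
  set w := z * star z with hwdef
  have hw : IsSelfAdjoint w := IsSelfAdjoint.mul_star_self z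
  set M : ℝ := ‖w‖ * ‖(1 : B)‖ + 1 with hMdef
  have hM : (0 : ℝ) < M := by positivity
  set u : B := 1 - (M⁻¹ : ℝ) • w with hudef
  have h1u : (1 : B) - u = (M⁻¹ : ℝ) • w := by rw [hudef, sub_sub_cancel]
  have hsA : (M⁻¹ : ℝ) • w ∈ A := by
    rw [← Complex.coe_smul]; exact A.smul_mem _ hzz
  have hmem : ∀ k : ℕ, (1 : B) - u ^ k ∈ A := by
    intro k
    induction k with
    | zero => simpa using A.zero_mem
    | succ k ih =>
      have hid : (1 : B) - u ^ (k + 1)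
          = ((1 : B) - u) + (((1 : B) - u ^ k) - ((1 : B) - u) * ((1 : B) - u ^ k)) := by
        rw [pow_succ']; noncomm_ring
      rw [hid, h1u]
      exact Submodule.add_mem _ hsA (Submodule.sub_mem _ ih (hAmul _ hsA _ ih))
  have hu_cfc : u = cfc (fun t : ℝ => 1 - M⁻¹ * t) w := by
    rw [cfc_sub (fun _ : ℝ => (1:ℝ)) (fun t : ℝ => M⁻¹ * t) w, cfc_const_mul_id M⁻¹ w hw,
      cfc_const 1 w hw, map_one, hudef]
  have hk_cfc : ∀ k : ℕ, u ^ k * w * u ^ k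
      = cfc (fun t : ℝ => (1 - M⁻¹ * t) ^ k * (t * (1 - M⁻¹ * t) ^ k)) w := by
    intro k
    rw [cfc_mul (fun t : ℝ => (1 - M⁻¹ * t) ^ k) (fun t : ℝ => t * (1 - M⁻¹ * t) ^ k) w
        (by fun_prop : Continuous (fun t : ℝ => (1 - M⁻¹ * t) ^ k)).continuousOn
        (by fun_prop : Continuous (fun t : ℝ => t * (1 - M⁻¹ * t) ^ k)).continuousOn,
      cfc_mul (fun t : ℝ => t) (fun t : ℝ => (1 - M⁻¹ * t) ^ k) w
        (by fun_prop : Continuous (fun t : ℝ => t)).continuousOn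
        (by fun_prop : Continuous (fun t : ℝ => (1 - M⁻¹ * t) ^ k)).continuousOn,
      cfc_pow (fun t : ℝ => 1 - M⁻¹ * t) k w
        (by fun_prop : Continuous (fun t : ℝ => 1 - M⁻¹ * t)).continuousOn hw,
      cfc_id' ℝ w hw, ← hu_cfc]
    simp only [hwdef, mul_assoc]
  have hspec : ∀ t ∈ spectrum ℝ w, 0 ≤ t ∧ t ≤ M := by
    intro t ht
    constructor
    · have := spectrum_star_mul_self_nonneg (b := star z) (A := B)
      rw [star_star] at this
      exact this t ht
    · have := spectrum.norm_le_norm_mul_of_mem ht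
      rw [Real.norm_eq_abs] at this
      calc t ≤ |t| := le_abs_self t
        _ ≤ ‖w‖ * ‖(1:B)‖ := this
        _ ≤ M := by rw [hMdef]; linarith
  have hbound : ∀ k : ℕ, ‖u ^ k * w * u ^ k‖ ≤ M / (k + 1) := by
    intro k
    rw [hk_cfc k]
    apply norm_cfc_le (by positivity)
    intro t ht
    obtain ⟨h0, hM'⟩ := hspec t ht
    set q : ℝ := 1 - M⁻¹ * t with hqdef
    have hq0 : 0 ≤ q := by
      rw [hqdef]; have : M⁻¹ * t ≤ 1 := by
        rw [← inv_mul_cancel₀ (ne_of_gt hM)]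
        exact mul_le_mul_of_nonneg_left hM' (by positivity)
      linarith
    have hq1 : q ≤ 1 := by
      rw [hqdef]; have : 0 ≤ M⁻¹ * t := by positivity
      linarith
    have hqk0 : 0 ≤ q ^ k := pow_nonneg hq0 k
    have hqk1 : q ^ k ≤ 1 := pow_le_one₀ hq0 hq1
    have hval : q ^ k * (t * q ^ k) = t * q ^ k * q ^ k := by ring
    rw [hval, Real.norm_eq_abs, abs_of_nonneg (by positivity)]
    have key : t * q ^ k * (k + 1 : ℝ) ≤ M := by
      have ht' : t = M * (1 - q) := by
        rw [hqdef]; field_simp; ring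
      have hS : (k + 1 : ℝ) * q ^ k ≤ ∑ i ∈ Finset.range (k + 1), q ^ i := by
        calc (k + 1 : ℝ) * q ^ k = ∑ _i ∈ Finset.range (k + 1), q ^ k := by
              simp [Finset.sum_const, nsmul_eq_mul]
          _ ≤ ∑ i ∈ Finset.range (k + 1), q ^ i :=
            Finset.sum_le_sum fun i hi =>
              pow_le_pow_of_le_one hq0 hq1 (Nat.lt_succ_iff.mp (Finset.mem_range.mp hi))
      have h1q : 0 ≤ 1 - q := by linarith
      have hmul := mul_le_mul_of_nonneg_left hS h1q
      have hgs := geom_sum_mul q (k + 1)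
      have hq' : 0 ≤ q ^ (k + 1) := pow_nonneg hq0 _
      have hgs2 : (1 - q) * (∑ i ∈ Finset.range (k + 1), q ^ i) = 1 - q ^ (k + 1) := by
        linear_combination -hgs
      have h5 := mul_le_mul_of_nonneg_left hmul hM.le
      rw [hgs2] at h5
      rw [ht']
      nlinarith [h5, mul_nonneg hM.le hq']
    have hk1 : (0 : ℝ) < (k : ℝ) + 1 := by positivity
    calc t * q ^ k * q ^ k ≤ t * q ^ k := by
          nlinarith [mul_nonneg (mul_nonneg h0 hqk0) (sub_nonneg.mpr hqk1)]
      _ ≤ M / (k + 1) := by rw [le_div_iff₀ hk1]; exact key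
  have husa : IsSelfAdjoint u := hu_cfc ▸ cfc_predicate _ w
  rw [Submodule.topologicalClosure_coe]
  rw [Metric.mem_closure_iff]
  intro ε hε
  obtain ⟨k, hk⟩ := exists_nat_gt (M / ε ^ 2)
  refine ⟨(1 - u ^ k) * z, Submodule.subset_span (hgen _ (hmem k)), ?_⟩
  have hdiff : z - (1 - u ^ k) * z = u ^ k * z := by noncomm_ring
  rw [dist_eq_norm, hdiff]
  have hsq : ‖u ^ k * z‖ ^ 2 = ‖u ^ k * w * u ^ k‖ := by
    rw [sq, ← CStarRing.norm_self_mul_star (x := u ^ k * z)]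
    congr 1
    rw [star_mul, (husa.pow k).star_eq, hwdef]
    simp only [mul_assoc]
  have hlt : ‖u ^ k * z‖ ^ 2 < ε ^ 2 := by
    rw [hsq]
    calc ‖u ^ k * w * u ^ k‖ ≤ M / (k + 1) := hbound k
      _ < ε ^ 2 := by
        rw [div_lt_iff₀ (by positivity)]
        have hε2 : (0:ℝ) < ε ^ 2 := by positivity
        rw [div_lt_iff₀ hε2] at hk
        nlinarith
  have := lt_of_pow_lt_pow_left₀ 2 hε.le hlt
  exact this

/-- For a concrete product system `{X_p}` over a left-cancellative monoid `P` inside a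
C*-algebra `B` (with `A := X_e` a C*-subalgebra, `X_p · X_q ⊆ X_{pq}` and
`X_p* · X_{pq} ⊆ X_q`), if `r ∈ P` has a two-sided inverse `r' ∈ P` then
`[A·X_r]* = [A·X_{r'}]`. -/
theorem stmt13 {P : Type*} [Monoid P] [IsLeftCancelMul P]
    {B : Type*} [NormedRing B] [StarRing B] [CStarRing B]
    [NormedAlgebra ℂ B] [StarModule ℂ B] [CompleteSpace B]
    (X : P → Submodule ℂ B) (hclosed : ∀ p, IsClosed (X p : Set B))
    (hAstar : ∀ a ∈ X 1, star a ∈ X 1)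
    (hAmul : ∀ a ∈ X 1, ∀ b ∈ X 1, a * b ∈ X 1)
    (hmul : ∀ p q : P, ∀ x ∈ X p, ∀ y ∈ X q, x * y ∈ X (p * q))
    (hadj : ∀ p q : P, ∀ x ∈ X p, ∀ y ∈ X (p * q), star x * y ∈ X q)
    (r r' : P) (h1 : r * r' = 1) (h2 : r' * r = 1) :
    star '' (((Submodule.span ℂ {b : B | ∃ a ∈ X 1, ∃ x ∈ X r,
        b = a * x}).topologicalClosure : Submodule ℂ B) : Set B)
      = (((Submodule.span ℂ {b : B | ∃ a ∈ X 1, ∃ x ∈ X r',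
        b = a * x}).topologicalClosure : Submodule ℂ B) : Set B) := by
  have key : ∀ s s' : P, s * s' = 1 →
      ∀ v ∈ (Submodule.span ℂ {b : B | ∃ a ∈ X 1, ∃ x ∈ X s,
        b = a * x}).topologicalClosure,
      star v ∈ (Submodule.span ℂ {b : B | ∃ a ∈ X 1, ∃ x ∈ X s',
        b = a * x}).topologicalClosure := by
    intro s s' hss
    set C := (Submodule.span ℂ {b : B | ∃ a ∈ X 1, ∃ x ∈ X s',
        b = a * x}).topologicalClosure with hC
    let T : Submodule ℂ B :=
      { carrier := {v | star v ∈ C}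
        add_mem' := by
          intro x y hx hy
          simp only [Set.mem_setOf_eq, star_add] at *
          exact C.add_mem hx hy
        zero_mem' := by
          simp only [Set.mem_setOf_eq, star_zero]
          exact C.zero_mem
        smul_mem' := by
          intro c x hx
          simp only [Set.mem_setOf_eq, star_smul] at *
          exact C.smul_mem _ hx }
    have hCc : IsClosed (C : Set B) := by
      rw [hC]; exact Submodule.isClosed_topologicalClosure _
    have hTc : IsClosed (T : Set B) := hCc.preimage continuous_star
    have hle : Submodule.span ℂ {b : B | ∃ a ∈ X 1, ∃ x ∈ X s, b = a * x} ≤ T := by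
      rw [Submodule.span_le]
      rintro b ⟨a, ha, x, hx, rfl⟩
      show star (a * x) ∈ C
      have hz : star (a * x) ∈ X s' := by
        rw [star_mul]
        have hsa : star a ∈ X (s * s') := by rw [hss]; exact hAstar a ha
        exact hadj s s' x hx (star a) hsa
      have hzz : star (a * x) * star (star (a * x)) ∈ X 1 := by
        rw [star_star, star_mul]
        have hax : a * x ∈ X s := by
          have := hmul 1 s a ha x hx; rwa [one_mul] at this
        have h3 : star a * (a * x) ∈ X (s * 1) := by
          have := hmul 1 s (star a) (hAstar a ha) (a * x) hax
          rwa [one_mul, ← mul_one s] at this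
        have := hadj s 1 x hx _ h3
        rwa [mul_assoc]
      exact aux_mem_closure (X 1) (hclosed 1) hAmul _ (star (a * x)) hzz
        (fun e he => ⟨e, he, star (a * x), hz, rfl⟩)
    exact fun v hv => Submodule.topologicalClosure_minimal _ hle hTc hv
  ext v
  constructor
  · rintro ⟨x, hx, rfl⟩
    exact key r r' h1 x hx
  · intro hv
    exact ⟨star v, key r' r h2 v hv, star_star v⟩
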